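/- Discrete transfer formula: Let d ≥ 1 and let G¹, G² ∈ (ℝ^d)^{N+1} with G²_N = 0. Define S ∈ ℝ^{N+1} by S_i = ∑_{r=1}^{N} ∑_{j=0}^{N−r+1} (A_r)_{i,j} (G¹_j · G²_{j+r−1}) for i = 0,…,N (every nonzero entry (A_r)_{i,j} has j + r − 1 ≤ N, so all indices are well defined; for r = 1 the inner sum runs over j = 0,…,N). Then for every k = 1,…,N: G¹_k · (Δ^α_+ G²)_{k−1} − (ᶜΔ^α_− G¹)_k · G²_{k−1} = h^{1−α} (S_k − S_{k−1})/h. -/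
import Mathlib


open Finset Filter
open scoped RealInnerProductSpace Topology

noncomputable section

/-- `ℝ^n` with the euclidean norm. -/
abbrev Euc (n : ℕ) : Type := EuclideanSpace ℝ (Fin n)

/-- The Grünwald–Letnikov coefficients `α_r = (−α)(1−α)⋯(r−1−α)/r!`, with `α_0 = 1`. -/
def glCoef (α : ℝ) (r : ℕ) : ℝ :=
  (∏ i ∈ Finset.range r, ((i : ℝ) - α)) / (Nat.factorial r : ℝ)

/-- Left discrete fractional derivative `(Δ^α_− G)_k = h^{−α} ∑_{r=0}^{k} α_r G_{k−r}`. -/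
def dMinus {n : ℕ} (α h : ℝ) (G : ℕ → Euc n) (k : ℕ) : Euc n :=
  (h ^ (-α)) • ∑ r ∈ Finset.range (k + 1), glCoef α r • G (k - r)

/-- Right discrete fractional derivative `(Δ^α_+ G)_k = h^{−α} ∑_{r=0}^{N−k} α_r G_{k+r}`. -/
def dPlus {n : ℕ} (N : ℕ) (α h : ℝ) (G : ℕ → Euc n) (k : ℕ) : Euc n :=
  (h ^ (-α)) • ∑ r ∈ Finset.range (N - k + 1), glCoef α r • G (k + r)

/-- Left Caputo discrete fractional derivative `(ᶜΔ^α_− G)_k = h^{−α} ∑_{r=0}^{k} α_r (G_{k−r} − G_0)`. -/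
def cdMinus {n : ℕ} (α h : ℝ) (G : ℕ → Euc n) (k : ℕ) : Euc n :=
  dMinus α h (fun j => G j - G 0) k

/-- Right Caputo discrete fractional derivative
`(ᶜΔ^α_+ G)_k = h^{−α} ∑_{r=0}^{N−k} α_r (G_{k+r} − G_N)`. -/
def cdPlus {n : ℕ} (N : ℕ) (α h : ℝ) (G : ℕ → Euc n) (k : ℕ) : Euc n :=
  dPlus N α h (fun j => G j - G N) k

/-- `β^α_r = ∑_{k=0}^{r} α_k`. -/
def betaCoef (α : ℝ) (r : ℕ) : ℝ := ∑ k ∈ Finset.range (r + 1), glCoef α k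

/-- The matrix `B_r` (with indices `0,…,N`): `B_1 = Id` and, for `2 ≤ r ≤ N`,
`(B_r)_{i,j} = [1≤i≤N−1]·[1≤j≤N−r]·[0≤i−j≤r−1] − [j=0]·[r≤i]`. -/
def Bmat (N r i j : ℕ) : ℝ :=
  if r = 1 then (if i = j then 1 else 0)
  else
    (if (1 ≤ i ∧ i + 1 ≤ N) ∧ (1 ≤ j ∧ j + r ≤ N) ∧ (j ≤ i ∧ i < j + r) then 1 else 0)
      - (if j = 0 ∧ r ≤ i then 1 else 0)

/-- The matrix `C_r`: `(C_r)_{i,j} = [r≤i]·[j=0]`. -/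
def Cmat (r i j : ℕ) : ℝ := if r ≤ i ∧ j = 0 then 1 else 0

/-- The matrix `A_r = α_r B_r + β^α_r C_r`. -/
def Amat (α : ℝ) (N r i j : ℕ) : ℝ := glCoef α r * Bmat N r i j + betaCoef α r * Cmat r i j

/-- `S_i = ∑_{r=1}^{N} ∑_{j=0}^{N−r+1} (A_r)_{i,j} (G¹_j · G²_{j+r−1})`. -/
def transferS {n : ℕ} (N : ℕ) (α : ℝ) (G1 G2 : ℕ → Euc n) (i : ℕ) : ℝ :=
  ∑ r ∈ Finset.Icc 1 N, ∑ j ∈ Finset.range (N - r + 2),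
    Amat α N r i j * ⟪G1 j, G2 (j + r - 1)⟫

lemma glCoef_zero (α : ℝ) : glCoef α 0 = 1 := by simp [glCoef]

set_option maxHeartbeats 2000000 in
lemma key_identity {d : ℕ} (N : ℕ) (hN : 1 ≤ N) (α : ℝ) (G1 G2 : ℕ → Euc d)
    (hG2 : G2 N = 0) (k : ℕ) (hk1 : 1 ≤ k) (hk2 : k ≤ N) :
    (∑ r ∈ Finset.range (N - (k - 1) + 1), glCoef α r * ⟪G1 k, G2 (k - 1 + r)⟫)
      - ∑ r ∈ Finset.range (k + 1), glCoef α r * ⟪G1 (k - r) - G1 0, G2 (k - 1)⟫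
    = transferS N α G1 G2 k - transferS N α G1 G2 (k - 1) := by
  have hD : ∀ r j : ℕ, 1 ≤ r → r ≤ N →
      Amat α N r k j - Amat α N r (k - 1) j =
        (if j = k ∧ (r = 1 ∨ k + r ≤ N) then glCoef α r else 0)
        - (if 1 ≤ j ∧ j + r = k then glCoef α r else 0)
        + (if j = 0 ∧ r = k then betaCoef α r - glCoef α r else 0) := by
    intro r j hr1 hr2
    simp only [Amat, Bmat, Cmat]
    rcases eq_or_ne r 1 with rfl | hr
    · simp only [eq_self_iff_true, if_true, true_or, and_true]
      split_ifs <;> first | (exfalso; omega) | ring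
    · rw [if_neg hr, if_neg hr]
      split_ifs <;> first | (exfalso; omega) | ring
  have hkmem : k ∈ Finset.Icc 1 N := Finset.mem_Icc.mpr ⟨hk1, hk2⟩
  have hin : ∀ r ∈ Finset.Icc 1 N,
      ((∑ j ∈ Finset.range (N - r + 2), Amat α N r k j * ⟪G1 j, G2 (j + r - 1)⟫)
        - ∑ j ∈ Finset.range (N - r + 2), Amat α N r (k - 1) j * ⟪G1 j, G2 (j + r - 1)⟫)
      = (if r = 1 ∨ k + r ≤ N then glCoef α r * ⟪G1 k, G2 (k - 1 + r)⟫ else 0)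
        - (if r + 1 ≤ k then glCoef α r * ⟪G1 (k - r), G2 (k - 1)⟫ else 0)
        + (if r = k then (betaCoef α k - glCoef α k) * ⟪G1 0, G2 (k - 1)⟫ else 0) := by
    intro r hr
    rw [Finset.mem_Icc] at hr
    obtain ⟨hr1, hr2⟩ := hr
    rw [← Finset.sum_sub_distrib]
    have step : ∀ j ∈ Finset.range (N - r + 2),
        Amat α N r k j * ⟪G1 j, G2 (j + r - 1)⟫ - Amat α N r (k - 1) j * ⟪G1 j, G2 (j + r - 1)⟫
        = (if j = k ∧ (r = 1 ∨ k + r ≤ N) then glCoef α r else 0) * ⟪G1 j, G2 (j + r - 1)⟫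
          - (if 1 ≤ j ∧ j + r = k then glCoef α r else 0) * ⟪G1 j, G2 (j + r - 1)⟫
          + (if j = 0 ∧ r = k then betaCoef α r - glCoef α r else 0) * ⟪G1 j, G2 (j + r - 1)⟫ := by
      intro j _
      rw [← sub_mul, hD r j hr1 hr2]
      ring
    rw [Finset.sum_congr rfl step, Finset.sum_add_distrib, Finset.sum_sub_distrib]
    congr 1
    · congr 1
      · -- first delta sum
        by_cases hc : r = 1 ∨ k + r ≤ N
        · rw [Finset.sum_eq_single k]
          · rw [if_pos ⟨rfl, hc⟩, if_pos hc]
            have : k + r - 1 = k - 1 + r := by omega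
            rw [this]
          · intro j _ hjk
            rw [if_neg (by tauto), zero_mul]
          · intro hk'
            exact absurd (Finset.mem_range.mpr (by omega)) hk'
        · rw [if_neg hc, Finset.sum_eq_zero]
          intro j _
          rw [if_neg (by tauto), zero_mul]
      · -- second delta sum
        by_cases hc : r + 1 ≤ k
        · rw [Finset.sum_eq_single (k - r)]
          · rw [if_pos (by omega), if_pos hc]
            have : k - r + r - 1 = k - 1 := by omega
            rw [this]
          · intro j _ hne
            rw [if_neg (by omega), zero_mul]
          · intro hk'
            exact absurd (Finset.mem_range.mpr (by omega)) hk'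
        · rw [if_neg hc, Finset.sum_eq_zero]
          intro j _
          rw [if_neg (by omega), zero_mul]
    · -- third delta sum
      by_cases hc : r = k
      · subst hc
        rw [Finset.sum_eq_single 0]
        · rw [if_pos ⟨rfl, rfl⟩, if_pos rfl]
          have : 0 + r - 1 = r - 1 := by omega
          rw [this]
        · intro j _ hj0
          rw [if_neg (by tauto), zero_mul]
        · intro hk'
          exact absurd (Finset.mem_range.mpr (by omega)) hk'
      · rw [if_neg hc, Finset.sum_eq_zero]
        intro j _
        rw [if_neg (by tauto), zero_mul]
  have hsub1 : Finset.Icc 1 (N - k + 1) ⊆ Finset.Icc 1 N :=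
    Finset.Icc_subset_Icc_right (by omega)
  have e1 : (∑ r ∈ Finset.Icc 1 N,
        if r = 1 ∨ k + r ≤ N then glCoef α r * ⟪G1 k, G2 (k - 1 + r)⟫ else 0)
      = ∑ r ∈ Finset.Icc 1 (N - k + 1), glCoef α r * ⟪G1 k, G2 (k - 1 + r)⟫ := by
    have h0 : ∀ r ∈ Finset.Icc 1 N, r ∉ Finset.Icc 1 (N - k + 1) →
        (if r = 1 ∨ k + r ≤ N then glCoef α r * ⟪G1 k, G2 (k - 1 + r)⟫ else 0) = 0 := by
      intro r h1 h2
      rw [Finset.mem_Icc] at h1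
      rw [Finset.mem_Icc] at h2
      rw [if_neg (by omega)]
    rw [← Finset.sum_subset hsub1 h0]
    apply Finset.sum_congr rfl
    intro r hr
    rw [Finset.mem_Icc] at hr
    by_cases hc : r = 1 ∨ k + r ≤ N
    · rw [if_pos hc]
    · rw [if_neg hc, show k - 1 + r = N from by omega, hG2, inner_zero_right, mul_zero]
  have hsub2 : Finset.Icc 1 (k - 1) ⊆ Finset.Icc 1 N :=
    Finset.Icc_subset_Icc_right (by omega)
  have e2 : (∑ r ∈ Finset.Icc 1 N,
        if r + 1 ≤ k then glCoef α r * ⟪G1 (k - r), G2 (k - 1)⟫ else 0)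
      = ∑ r ∈ Finset.Icc 1 (k - 1), glCoef α r * ⟪G1 (k - r), G2 (k - 1)⟫ := by
    have h0 : ∀ r ∈ Finset.Icc 1 N, r ∉ Finset.Icc 1 (k - 1) →
        (if r + 1 ≤ k then glCoef α r * ⟪G1 (k - r), G2 (k - 1)⟫ else 0) = 0 := by
      intro r h1 h2
      rw [Finset.mem_Icc] at h1
      rw [Finset.mem_Icc] at h2
      rw [if_neg (by omega)]
    rw [← Finset.sum_subset hsub2 h0]
    apply Finset.sum_congr rfl
    intro r hr
    rw [Finset.mem_Icc] at hr
    rw [if_pos (by omega)]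
  have e3 : (∑ r ∈ Finset.Icc 1 N,
        if r = k then (betaCoef α k - glCoef α k) * ⟪G1 0, G2 (k - 1)⟫ else 0)
      = (betaCoef α k - glCoef α k) * ⟪G1 0, G2 (k - 1)⟫ := by
    rw [Finset.sum_ite_eq' (Finset.Icc 1 N) k
      (fun _ => (betaCoef α k - glCoef α k) * ⟪G1 0, G2 (k - 1)⟫), if_pos hkmem]
  have hR : transferS N α G1 G2 k - transferS N α G1 G2 (k - 1)
      = (∑ r ∈ Finset.Icc 1 (N - k + 1), glCoef α r * ⟪G1 k, G2 (k - 1 + r)⟫)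
        - (∑ r ∈ Finset.Icc 1 (k - 1), glCoef α r * ⟪G1 (k - r), G2 (k - 1)⟫)
        + (betaCoef α k - glCoef α k) * ⟪G1 0, G2 (k - 1)⟫ := by
    unfold transferS
    rw [← Finset.sum_sub_distrib, Finset.sum_congr rfl hin, Finset.sum_add_distrib,
      Finset.sum_sub_distrib, e1, e2, e3]
  have hT1 : (∑ r ∈ Finset.range (N - (k - 1) + 1), glCoef α r * ⟪G1 k, G2 (k - 1 + r)⟫)
      = ⟪G1 k, G2 (k - 1)⟫
        + ∑ r ∈ Finset.Icc 1 (N - k + 1), glCoef α r * ⟪G1 k, G2 (k - 1 + r)⟫ := by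
    rw [show N - (k - 1) + 1 = (N - k + 1) + 1 from by omega, Finset.sum_range_succ']
    have : (∑ i ∈ Finset.range (N - k + 1), glCoef α (i + 1) * ⟪G1 k, G2 (k - 1 + (i + 1))⟫)
        = ∑ r ∈ Finset.Icc 1 (N - k + 1), glCoef α r * ⟪G1 k, G2 (k - 1 + r)⟫ := by
      rw [← Finset.Ico_add_one_right_eq_Icc, Finset.sum_Ico_eq_sum_range]
      try simp only [Nat.add_sub_cancel]
      exact Finset.sum_congr rfl (fun i _ => by rw [add_comm 1 i])
    rw [this, glCoef_zero, one_mul, add_comm]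
    norm_num
  have hT2 : (∑ r ∈ Finset.range (k + 1), glCoef α r * ⟪G1 (k - r) - G1 0, G2 (k - 1)⟫)
      = ⟪G1 k, G2 (k - 1)⟫
        + (∑ r ∈ Finset.Icc 1 (k - 1), glCoef α r * ⟪G1 (k - r), G2 (k - 1)⟫)
        + glCoef α k * ⟪G1 0, G2 (k - 1)⟫ - betaCoef α k * ⟪G1 0, G2 (k - 1)⟫ := by
    have expand : ∀ r ∈ Finset.range (k + 1),
        glCoef α r * ⟪G1 (k - r) - G1 0, G2 (k - 1)⟫
        = glCoef α r * ⟪G1 (k - r), G2 (k - 1)⟫ - glCoef α r * ⟪G1 0, G2 (k - 1)⟫ := by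
      intro r _
      rw [inner_sub_left]
      ring
    rw [Finset.sum_congr rfl expand, Finset.sum_sub_distrib, ← Finset.sum_mul, ← betaCoef,
      Finset.sum_range_succ, Nat.sub_self,
      show Finset.range k = Finset.range ((k - 1) + 1) from by rw [show k - 1 + 1 = k from by omega],
      Finset.sum_range_succ']
    have : (∑ i ∈ Finset.range (k - 1), glCoef α (i + 1) * ⟪G1 (k - (i + 1)), G2 (k - 1)⟫)
        = ∑ r ∈ Finset.Icc 1 (k - 1), glCoef α r * ⟪G1 (k - r), G2 (k - 1)⟫ := by
      rw [← Finset.Ico_add_one_right_eq_Icc, Finset.sum_Ico_eq_sum_range]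
      try simp only [Nat.add_sub_cancel]
      exact Finset.sum_congr rfl (fun i _ => by rw [add_comm 1 i])
    rw [this, glCoef_zero, one_mul, Nat.sub_zero]
    ring
  rw [hT1, hT2, hR]
  ring

/-- **Discrete transfer formula.** -/
theorem discrete_transfer_formula
    (d N : ℕ) (hd : 1 ≤ d) (hN : 1 ≤ N)
    (a b : ℝ) (hab : a < b) (α : ℝ) (hα : 0 < α) (hα1 : α ≤ 1)
    (G1 G2 : ℕ → Euc d) (hG2 : G2 N = 0) :
    ∀ k, 1 ≤ k → k ≤ N →
      ⟪G1 k, dPlus N α ((b - a) / (N : ℝ)) G2 (k - 1)⟫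
        - ⟪cdMinus α ((b - a) / (N : ℝ)) G1 k, G2 (k - 1)⟫
      = ((b - a) / (N : ℝ)) ^ ((1 : ℝ) - α) *
          ((transferS N α G1 G2 k - transferS N α G1 G2 (k - 1)) / ((b - a) / (N : ℝ))) := by
  intro k hk1 hk2
  set h : ℝ := (b - a) / (N : ℝ) with hh
  have hNpos : (0 : ℝ) < (N : ℝ) := by exact_mod_cast hN
  have hhpos : 0 < h := div_pos (by linarith) hNpos
  have expand1 : ⟪G1 k, dPlus N α h G2 (k - 1)⟫
      = h ^ (-α) * ∑ r ∈ Finset.range (N - (k - 1) + 1), glCoef α r * ⟪G1 k, G2 (k - 1 + r)⟫ := by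
    rw [dPlus, real_inner_smul_right, inner_sum]
    simp only [real_inner_smul_right]
  have expand2 : ⟪cdMinus α h G1 k, G2 (k - 1)⟫
      = h ^ (-α) * ∑ r ∈ Finset.range (k + 1), glCoef α r * ⟪G1 (k - r) - G1 0, G2 (k - 1)⟫ := by
    rw [cdMinus, dMinus, real_inner_smul_left, sum_inner]
    simp only [real_inner_smul_left]
  rw [expand1, expand2, ← mul_sub, key_identity N hN α G1 G2 hG2 k hk1 hk2]
  have hrpow : h ^ (-α) = h ^ ((1 : ℝ) - α) * h⁻¹ := by
    rw [← Real.rpow_neg_one h, ← Real.rpow_add hhpos]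
    congr 1
    ring
  rw [hrpow, div_eq_mul_inv]
  ring
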